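/- Let λ : ℕ → ℝ be a nonnegative summable sequence, let a : ℕ → ℝ with ∑_k a_k² < ∞, and let μ̃ = ⨂_{k∈ℕ} N(a_k, λ_k) be the infinite product Gaussian measure on ℕ → ℝ. Then for every h ∈ ℓ²(ℕ), the series ∑_k h_k x_k converges for μ̃-almost every x, and ∫ exp(i ∑_k h_k x_k) dμ̃(x) = exp(i ∑_k a_k h_k) · exp(−(1/2) ∑_k λ_k h_k²). -/

import Mathlib

open MeasureTheory ProbabilityTheory Complex Real Set
open scoped NNReal ENNReal

lemma gaussian_cf (m : ℝ) (v : ℝ≥0) (t : ℝ) :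
    ∫ x : ℝ, Complex.exp (Complex.I * ((t * x : ℝ) : ℂ)) ∂gaussianReal m v
      = Complex.exp (Complex.I * ((t * m : ℝ) : ℂ) - (v : ℝ) * t ^ 2 / 2) := by
  by_cases hv : v = 0
  · subst hv
    rw [gaussianReal_zero_var, integral_dirac]
    push_cast
    ring_nf
  · rw [gaussianReal_of_var_ne_zero _ hv]
    have hV : 0 < (v : ℝ) := by positivity
    have hπV : (0:ℝ) < 2 * π * (v:ℝ) := by positivity
    have hVC : (((v:ℝ)):ℂ) ≠ 0 := by exact_mod_cast hV.ne'
    have hpdf : (gaussianPDF m v) = fun x => ((Real.toNNReal (gaussianPDFReal m v x) : ℝ≥0) : ℝ≥0∞) := by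
      funext x; rfl
    rw [hpdf, integral_withDensity_eq_integral_smul
      ((measurable_gaussianPDFReal m v).real_toNNReal) _]
    set b : ℂ := -(1/(2*((v:ℝ):ℂ))) with hbdef
    set c : ℂ := (m:ℂ)/((v:ℝ):ℂ) + Complex.I * (t:ℂ) with hcdef
    set d : ℂ := -((m:ℂ)^2/(2*((v:ℝ):ℂ))) with hddef
    have hb : b.re < 0 := by
      simp only [hbdef, neg_re, ofReal_re]
      have : (1/(2*((v:ℝ):ℂ))) = ((1/(2*(v:ℝ)) : ℝ) : ℂ) := by push_cast; ring
      rw [this, Complex.ofReal_re]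
      have : (0:ℝ) < 1/(2*(v:ℝ)) := by positivity
      linarith
    have hpt : ∀ x : ℝ, (Real.toNNReal (gaussianPDFReal m v x)) • Complex.exp (Complex.I * ((t*x:ℝ):ℂ))
        = (Real.sqrt (2*π*(v:ℝ)))⁻¹ • Complex.exp (b*x^2 + c*x + d) := by
      intro x
      rw [NNReal.smul_def, Real.coe_toNNReal _ (gaussianPDFReal_nonneg _ _ _),
        gaussianPDFReal]
      rw [Complex.real_smul, Complex.real_smul]
      push_cast
      rw [mul_assoc, ← Complex.exp_add]
      congr 1
      rw [hbdef, hcdef, hddef]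
      field_simp
      congr 1
      ring
    simp_rw [hpt]
    rw [integral_smul, integral_cexp_quadratic hb c d]
    have h1 : (↑π / -b : ℂ) = ((2*π*(v:ℝ) : ℝ) : ℂ) := by
      rw [hbdef]; push_cast; field_simp
    have h2 : ((2*π*(v:ℝ):ℝ):ℂ) ^ (1/2 : ℂ) = ((Real.sqrt (2*π*(v:ℝ)) : ℝ) : ℂ) := by
      rw [show ((1:ℂ)/2) = ((1/2 : ℝ) : ℂ) by norm_num, ← Complex.ofReal_cpow hπV.le]
      norm_cast
      rw [Real.sqrt_eq_rpow]
    have h3 : d - c^2/(4*b) = Complex.I * ((t*m:ℝ):ℂ) - ((v:ℝ):ℂ) * t^2/2 := by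
      rw [hbdef, hcdef, hddef]
      push_cast
      field_simp
      ring_nf
      linear_combination (4*((v:ℝ):ℂ)^2*(t:ℂ)^2) * Complex.I_sq
    rw [h1, h2, h3, Complex.real_smul, ← mul_assoc, ← Complex.ofReal_mul,
      inv_mul_cancel₀ (Real.sqrt_ne_zero'.mpr hπV)]
    push_cast
    ring_nf

lemma integral_Ioi_mul_exp {b : ℝ} (hb : 0 < b) :
    ∫ x in Ioi (0:ℝ), x * rexp (-b * x^2) = (2*b)⁻¹ := by
  have hc : 0 < ((b:ℂ)).re := by simpa using hb
  have h := integral_mul_cexp_neg_mul_sq hc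
  have h2 : ((∫ x in Ioi (0:ℝ), x * rexp (-b*x^2) : ℝ) : ℂ)
      = ∫ x in Ioi (0:ℝ), ((x * rexp (-b*x^2) : ℝ) : ℂ) := integral_ofReal.symm
  have h3 : ∫ x in Ioi (0:ℝ), ((x * rexp (-b*x^2) : ℝ) : ℂ)
      = ∫ x in Ioi (0:ℝ), (x : ℂ) * Complex.exp (-(b:ℂ) * (x:ℂ)^2) := by
    congr 1; funext x; push_cast [Complex.ofReal_exp]; ring_nf
  have := h2.trans (h3.trans h)
  have h4 : ((2*b)⁻¹ : ℂ) = (((2*b)⁻¹ : ℝ) : ℂ) := by push_cast; ring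
  rw [h4] at this
  exact_mod_cast this

lemma gauss_abs_center (v : ℝ≥0) :
    ∫⁻ x, ENNReal.ofReal |x| ∂gaussianReal 0 v ≤ ENNReal.ofReal (Real.sqrt v) := by
  by_cases hv : v = 0
  · subst hv
    rw [gaussianReal_zero_var, lintegral_dirac]
    simp
  · have hV : 0 < (v : ℝ) := by positivity
    have hπV : (0:ℝ) < 2 * π * (v:ℝ) := by positivity
    have h2V : (0:ℝ) < (2*(v:ℝ))⁻¹ := by positivity
    rw [gaussianReal_of_var_ne_zero _ hv,
      lintegral_withDensity_eq_lintegral_mul _ (measurable_gaussianPDF _ _)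
        (measurable_abs.ennreal_ofReal)]
    have hpt : ∀ x : ℝ, (gaussianPDF 0 v * fun a => ENNReal.ofReal |a|) x
        = ENNReal.ofReal ((Real.sqrt (2*π*(v:ℝ)))⁻¹ * (|x| * rexp (-(2*(v:ℝ))⁻¹ * x^2))) := by
      intro x
      simp only [Pi.mul_apply, gaussianPDF, ← ENNReal.ofReal_mul (gaussianPDFReal_nonneg _ _ _)]
      congr 1
      rw [gaussianPDFReal]
      ring_nf
    simp_rw [hpt]
    have hint0 : Integrable (fun x : ℝ => |x| * rexp (-(2*(v:ℝ))⁻¹ * x^2)) := by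
      have := (integrable_mul_exp_neg_mul_sq h2V).abs
      refine this.congr ?_
      filter_upwards with x
      rw [abs_mul, abs_of_pos (exp_pos _)]
    have hint : Integrable (fun x : ℝ =>
        (Real.sqrt (2*π*(v:ℝ)))⁻¹ * (|x| * rexp (-(2*(v:ℝ))⁻¹ * x^2))) := hint0.const_mul _
    rw [← ofReal_integral_eq_lintegral_ofReal hint]
    swap
    · filter_upwards with x
      positivity
    apply ENNReal.ofReal_le_ofReal
    rw [integral_const_mul]
    have habs : ∫ x : ℝ, |x| * rexp (-(2*(v:ℝ))⁻¹ * x^2)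
        = 2 * ∫ x in Ioi (0:ℝ), x * rexp (-(2*(v:ℝ))⁻¹ * x^2) := by
      rw [← integral_comp_abs (f := fun x => x * rexp (-(2*(v:ℝ))⁻¹ * x^2))]
      congr 1; funext x; rw [_root_.sq_abs]
    rw [habs, integral_Ioi_mul_exp h2V]
    have hval : (2 * (2*(v:ℝ))⁻¹)⁻¹ = (v:ℝ) := by
      field_simp
    rw [hval]
    rw [inv_mul_le_iff₀ (Real.sqrt_pos.mpr hπV)]
    have hs : Real.sqrt (2*π*(v:ℝ)) * Real.sqrt (v:ℝ) = Real.sqrt (2*π) * (v:ℝ) := by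
      rw [← Real.sqrt_mul hπV.le,
        show (2*π*(v:ℝ)*(v:ℝ)) = (2*π)*((v:ℝ)*(v:ℝ)) by ring,
        Real.sqrt_mul (by positivity), Real.sqrt_mul_self hV.le]
    rw [hs]
    have hpi : (2:ℝ) ≤ Real.sqrt (2*π) := by
      have h4 := Real.sqrt_le_sqrt (show (4:ℝ) ≤ 2*π by nlinarith [Real.pi_gt_three])
      rwa [show (4:ℝ) = 2^2 by norm_num, Real.sqrt_sq (by norm_num : (0:ℝ) ≤ 2)] at h4
    nlinarith [hpi, hV]

lemma gauss_abs (m : ℝ) (v : ℝ≥0) :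
    ∫⁻ x, ENNReal.ofReal |x| ∂gaussianReal m v
      ≤ ENNReal.ofReal (|m| + Real.sqrt v) := by
  have hmap : (gaussianReal m v).map (fun x => x + (-m)) = gaussianReal 0 v := by
    simpa using gaussianReal_map_add_const (μ := m) (v := v) (-m)
  have hcent : ∫⁻ x, ENNReal.ofReal |x + -m| ∂gaussianReal m v
      = ∫⁻ y, ENNReal.ofReal |y| ∂gaussianReal 0 v := by
    rw [← hmap, lintegral_map measurable_abs.ennreal_ofReal (measurable_add_const (-m))]
  calc ∫⁻ x, ENNReal.ofReal |x| ∂gaussianReal m v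
      ≤ ∫⁻ x, (ENNReal.ofReal |m| + ENNReal.ofReal |x + -m|) ∂gaussianReal m v := by
        apply lintegral_mono
        intro x
        dsimp only
        rw [← ENNReal.ofReal_add (abs_nonneg _) (abs_nonneg _)]
        apply ENNReal.ofReal_le_ofReal
        have := abs_add_le m (x - m)
        simp only [add_sub_cancel] at this
        simpa [sub_eq_add_neg] using this
    _ = ENNReal.ofReal |m| + ∫⁻ x, ENNReal.ofReal |x + -m| ∂gaussianReal m v := by
        rw [lintegral_add_left measurable_const, lintegral_const, measure_univ, mul_one]
    _ ≤ ENNReal.ofReal |m| + ENNReal.ofReal (Real.sqrt v) := by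
        rw [hcent]; exact add_le_add_right (gauss_abs_center v) _
    _ = ENNReal.ofReal (|m| + Real.sqrt v) :=
        (ENNReal.ofReal_add (abs_nonneg _) (Real.sqrt_nonneg _)).symm

lemma integral_pi_prod {ι : Type*} [Fintype ι] {α : ι → Type*} [∀ i, MeasurableSpace (α i)]
    (μm : ∀ i, Measure (α i)) [∀ i, SigmaFinite (μm i)]
    (f : ∀ i, α i → ℂ) :
    ∫ x : ∀ i, α i, ∏ i, f i (x i) ∂Measure.pi μm = ∏ i, ∫ x, f i x ∂μm i := by
  letI : ∀ i : ι, MeasureSpace (α i) := fun i => ⟨μm i⟩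
  haveI : ∀ i : ι, SigmaFinite (volume : Measure (α i)) :=
    fun i => (inferInstance : SigmaFinite (μm i))
  exact MeasureTheory.integral_fintype_prod_eq_prod (E := α) f

lemma pi_map_eval {ι : Type*} [Fintype ι] [DecidableEq ι] (μm : ι → Measure ℝ)
    [∀ i, IsProbabilityMeasure (μm i)] (i : ι) :
    (Measure.pi μm).map (Function.eval i) = μm i := by
  ext s hs
  rw [Measure.map_apply (measurable_pi_apply i) hs, Set.eval_preimage,
    Measure.pi_pi]
  rw [Finset.prod_eq_single i]
  · simp
  · intro j _ hj
    simp [Function.update_of_ne hj]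
  · simp

lemma habs2 {f g : ℕ → ℝ} (hf : Summable fun k => f k ^ 2) (hg : Summable fun k => g k ^ 2) :
    Summable fun k => |f k * g k| := by
  refine Summable.of_nonneg_of_le (fun k => abs_nonneg _) (fun k => ?_)
    (((hf.add hg)).mul_left (2⁻¹ : ℝ))
  rw [abs_mul]
  nlinarith [sq_nonneg (|f k| - |g k|), _root_.sq_abs (f k), _root_.sq_abs (g k),
    abs_nonneg (f k), abs_nonneg (g k)]

/-- Characteristic functional of the infinite-product Gaussian measure
`μ̃ = ⨂_{k∈ℕ} N(a k, λ k)` on `ℕ → ℝ`: for every square-summable sequence `h`, the series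
`∑ k, h k * x k` converges `μ̃`-a.e., and
`∫ exp(i ∑ k, h k * x k) dμ̃(x) = exp(i ∑ k, a k * h k) * exp(-(1/2) ∑ k, λ k * (h k)^2)`. -/
theorem infinite_product_gaussian_characteristic_functional
    (lam a : ℕ → ℝ) (hlam_nonneg : ∀ k, 0 ≤ lam k) (hlam_summable : Summable lam)
    (ha : Summable fun k => a k ^ 2)
    (μ : Measure (ℕ → ℝ)) [IsProbabilityMeasure μ]
    (hμ : IsProjectiveLimit μ
      (fun I : Finset ℕ =>
        Measure.pi fun i : I => gaussianReal (a i) (Real.toNNReal (lam i))))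
    (h : ℕ → ℝ) (hh : Summable fun k => h k ^ 2) :
    (∀ᵐ x ∂μ, Summable fun k => h k * x k) ∧
      ∫ x, Complex.exp (Complex.I * ((∑' k, h k * x k : ℝ) : ℂ)) ∂μ =
        Complex.exp (Complex.I * ((∑' k, a k * h k : ℝ) : ℂ)) *
          Complex.exp (-(1 / 2 : ℂ) * ((∑' k, lam k * h k ^ 2 : ℝ) : ℂ)) := by
  set ν : ℕ → Measure ℝ := fun k => gaussianReal (a k) (Real.toNNReal (lam k)) with hν
  have hmap : ∀ k : ℕ, μ.map (fun x => x k) = ν k := by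
    intro k
    have h1 := hμ {k}
    have e0 : (μ.map (Finset.restrict {k})).map
          (Function.eval (⟨k, Finset.mem_singleton_self k⟩ : ({k} : Finset ℕ)))
        = μ.map (Function.eval (⟨k, Finset.mem_singleton_self k⟩ : ({k} : Finset ℕ))
            ∘ Finset.restrict {k}) :=
      Measure.map_map (measurable_pi_apply _) (Finset.measurable_restrict _)
    have e1 : (fun x : ℕ → ℝ => x k)
        = Function.eval (⟨k, Finset.mem_singleton_self k⟩ : ({k} : Finset ℕ))
            ∘ Finset.restrict {k} := rfl
    rw [e1, ← e0, h1, pi_map_eval]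
  -- summability facts
  have hbnd : Summable (fun k => |h k| * (|a k| + Real.sqrt (lam k))) := by
    have h1 : Summable (fun k => |h k * a k|) := habs2 hh ha
    have h2 : Summable (fun k => |h k * Real.sqrt (lam k)|) := by
      refine habs2 hh (hlam_summable.congr fun k => ?_)
      rw [Real.sq_sqrt (hlam_nonneg k)]
    refine (h1.add h2).congr fun k => ?_
    rw [abs_mul, abs_mul, _root_.abs_of_nonneg (Real.sqrt_nonneg _), mul_add]
  have hah : Summable fun k => a k * h k := by
    have := habs2 ha hh
    exact summable_abs_iff.mp this
  have hlh : Summable fun k => lam k * h k ^ 2 := by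
    refine Summable.of_nonneg_of_le
      (fun k => mul_nonneg (hlam_nonneg k) (sq_nonneg _)) (fun k => ?_)
      (hlam_summable.mul_right (∑' j, h j ^ 2))
    exact mul_le_mul_of_nonneg_left (hh.le_tsum k fun j _ => sq_nonneg _) (hlam_nonneg k)
  -- a.e. summability
  have hmeas_term : ∀ k : ℕ, Measurable fun x : ℕ → ℝ => ENNReal.ofReal |h k * x k| :=
    fun k => (Measurable.const_mul (measurable_pi_apply (X := fun _ : ℕ => ℝ) k) (h k)).abs.ennreal_ofReal
  have hlint : ∫⁻ x, ∑' k, ENNReal.ofReal |h k * x k| ∂μ < ⊤ := by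
    rw [lintegral_tsum fun k => (hmeas_term k).aemeasurable]
    have hterm : ∀ k : ℕ, ∫⁻ x, ENNReal.ofReal |h k * x k| ∂μ
        ≤ ENNReal.ofReal (|h k| * (|a k| + Real.sqrt (lam k))) := by
      intro k
      have e1 : ∫⁻ x, ENNReal.ofReal |h k * x k| ∂μ = ∫⁻ y, ENNReal.ofReal |h k * y| ∂ν k := by
        rw [← hmap k, lintegral_map ((measurable_id'.const_mul (h k)).abs.ennreal_ofReal)
          (measurable_pi_apply k)]
      rw [e1]
      calc ∫⁻ y, ENNReal.ofReal |h k * y| ∂ν k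
          = ∫⁻ y, ENNReal.ofReal |h k| * ENNReal.ofReal |y| ∂ν k := by
            congr 1; funext y; rw [abs_mul, ENNReal.ofReal_mul (abs_nonneg _)]
        _ = ENNReal.ofReal |h k| * ∫⁻ y, ENNReal.ofReal |y| ∂ν k :=
            lintegral_const_mul _ measurable_abs.ennreal_ofReal
        _ ≤ ENNReal.ofReal |h k| * ENNReal.ofReal (|a k| + Real.sqrt (lam k)) := by
            refine mul_le_mul_right ?_ _
            have hg := gauss_abs (a k) (Real.toNNReal (lam k))
            rwa [Real.coe_toNNReal _ (hlam_nonneg k)] at hg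
        _ = ENNReal.ofReal (|h k| * (|a k| + Real.sqrt (lam k))) :=
            (ENNReal.ofReal_mul (abs_nonneg _)).symm
    calc ∑' k, ∫⁻ x, ENNReal.ofReal |h k * x k| ∂μ
        ≤ ∑' k, ENNReal.ofReal (|h k| * (|a k| + Real.sqrt (lam k))) :=
          ENNReal.tsum_le_tsum hterm
      _ = ENNReal.ofReal (∑' k, |h k| * (|a k| + Real.sqrt (lam k))) :=
          (ENNReal.ofReal_tsum_of_nonneg (fun k => by positivity) hbnd).symm
      _ < ⊤ := ENNReal.ofReal_lt_top
  have haesum : ∀ᵐ x ∂μ, Summable fun k => h k * x k := by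
    have hfin := ae_lt_top (Measurable.ennreal_tsum hmeas_term) hlint.ne
    filter_upwards [hfin] with x hx
    have hs := ENNReal.summable_toReal hx.ne
    refine summable_abs_iff.mp (hs.congr fun k => ?_)
    rw [ENNReal.toReal_ofReal (abs_nonneg _)]
  refine ⟨haesum, ?_⟩
  -- finite-dimensional computation
  have hfin_int : ∀ n : ℕ,
      ∫ x, Complex.exp (Complex.I * ((∑ k ∈ Finset.range n, h k * x k : ℝ) : ℂ)) ∂μ
        = Complex.exp (Complex.I * ((∑ k ∈ Finset.range n, a k * h k : ℝ) : ℂ)) *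
          Complex.exp (-(1 / 2 : ℂ) * ((∑ k ∈ Finset.range n, lam k * h k ^ 2 : ℝ) : ℂ)) := by
    intro n
    set I' : Finset ℕ := Finset.range n with hI'
    have hres : ∀ x : ℕ → ℝ,
        Complex.exp (Complex.I * ((∑ k ∈ I', h k * x k : ℝ) : ℂ))
          = ∏ i : {x // x ∈ I'},
              Complex.exp (Complex.I * ((h i * I'.restrict x i : ℝ) : ℂ)) := by
      intro x
      rw [← Complex.exp_sum]
      congr 1
      rw [← Finset.mul_sum]
      congr 1
      rw [← Complex.ofReal_sum]
      congr 1
      simp only [Finset.restrict]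
      exact (Finset.sum_coe_sort I' fun k => h k * x k).symm
    have hmeasprod : Measurable fun y : {x // x ∈ I'} → ℝ =>
        ∏ i : {x // x ∈ I'}, Complex.exp (Complex.I * ((h i * y i : ℝ) : ℂ)) := by
      refine Finset.measurable_prod _ fun i _ => ?_
      exact Complex.measurable_exp.comp
        ((Complex.measurable_ofReal.comp (Measurable.const_mul (measurable_pi_apply (X := fun _ : {x // x ∈ I'} => ℝ) i) (h i))).const_mul Complex.I)
    calc ∫ x, Complex.exp (Complex.I * ((∑ k ∈ I', h k * x k : ℝ) : ℂ)) ∂μ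
        = ∫ x, ∏ i : {x // x ∈ I'},
              Complex.exp (Complex.I * ((h i * I'.restrict x i : ℝ) : ℂ)) ∂μ :=
          integral_congr_ae (Filter.Eventually.of_forall fun x => hres x)
      _ = ∫ y : {x // x ∈ I'} → ℝ,
            ∏ i : {x // x ∈ I'}, Complex.exp (Complex.I * ((h i * y i : ℝ) : ℂ))
              ∂(Measure.pi fun i : {x // x ∈ I'} => gaussianReal (a i) (Real.toNNReal (lam i))) := by
          have hμI : μ.map I'.restrict
              = Measure.pi fun i : {x // x ∈ I'} => gaussianReal (a i) (Real.toNNReal (lam i)) :=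
            hμ I'
          rw [← hμI, integral_map (I'.measurable_restrict).aemeasurable
            hmeasprod.aestronglyMeasurable]
      _ = ∏ i : {x // x ∈ I'}, ∫ y : ℝ, Complex.exp (Complex.I * ((h i * y : ℝ) : ℂ))
              ∂(gaussianReal (a i) (Real.toNNReal (lam i))) :=
          integral_pi_prod (fun i : {x // x ∈ I'} => gaussianReal (a i) (Real.toNNReal (lam i)))
            (fun i y => Complex.exp (Complex.I * ((h i * y : ℝ) : ℂ)))
      _ = Complex.exp (Complex.I * ((∑ k ∈ I', a k * h k : ℝ) : ℂ)) *
          Complex.exp (-(1 / 2 : ℂ) * ((∑ k ∈ I', lam k * h k ^ 2 : ℝ) : ℂ)) := ?_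
    have hcf : ∀ i : {x // x ∈ I'},
        ∫ y : ℝ, Complex.exp (Complex.I * ((h i * y : ℝ) : ℂ)) ∂gaussianReal (a i) (Real.toNNReal (lam i))
          = Complex.exp (Complex.I * ((h i * a i : ℝ) : ℂ)
              - ((Real.toNNReal (lam i) : ℝ) : ℂ) * (h i : ℂ) ^ 2 / 2) :=
      fun i => gaussian_cf (a i) (Real.toNNReal (lam i)) (h i)
    rw [Finset.prod_congr rfl fun i _ => hcf i, ← Complex.exp_sum, ← Complex.exp_add]
    congr 1
    have hsum1 : ∑ i : {x // x ∈ I'}, (Complex.I * ((h i * a i : ℝ) : ℂ)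
          - ((Real.toNNReal (lam i) : ℝ) : ℂ) * (h i : ℂ) ^ 2 / 2)
        = Complex.I * ((∑ k ∈ I', h k * a k : ℝ) : ℂ)
          - (((∑ k ∈ I', lam k * h k ^ 2 : ℝ)) : ℂ) / 2 := by
      rw [Finset.sum_sub_distrib, ← Finset.mul_sum, ← Complex.ofReal_sum, ← Finset.sum_div]
      congr 2
      · congr 1
        exact Finset.sum_attach I' fun k => h k * a k
      · have hl : ∀ k : ℕ, (((lam k).toNNReal : ℝ)) = lam k :=
          fun k => Real.coe_toNNReal _ (hlam_nonneg k)
        simp only [hl]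
        rw [Complex.ofReal_sum, ← Finset.sum_coe_sort I' (fun k => ((lam k * h k ^ 2 : ℝ) : ℂ))]
        refine Finset.sum_congr rfl fun i _ => ?_
        push_cast
        ring
    rw [hsum1]
    have : ∀ k, h k * a k = a k * h k := fun k => mul_comm _ _
    simp_rw [this]
    push_cast
    ring
  -- pass to the limit
  have hcont1 : Continuous fun r : ℝ => Complex.exp (Complex.I * (r : ℂ)) :=
    Complex.continuous_exp.comp (continuous_const.mul Complex.continuous_ofReal)
  have hcont2 : Continuous fun r : ℝ => Complex.exp (-(1/2 : ℂ) * (r : ℂ)) :=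
    Complex.continuous_exp.comp (continuous_const.mul Complex.continuous_ofReal)
  have hL1 : Filter.Tendsto
      (fun n => ∫ x, Complex.exp (Complex.I * ((∑ k ∈ Finset.range n, h k * x k : ℝ) : ℂ)) ∂μ)
      Filter.atTop (nhds (∫ x, Complex.exp (Complex.I * ((∑' k, h k * x k : ℝ) : ℂ)) ∂μ)) := by
    refine tendsto_integral_of_dominated_convergence (fun _ => (1 : ℝ)) ?_ ?_ ?_ ?_
    · intro n
      exact (Complex.measurable_exp.comp ((Complex.measurable_ofReal.comp
        (Finset.measurable_sum _ fun k _ => Measurable.const_mul (measurable_pi_apply (X := fun _ : ℕ => ℝ) k) (h k))).const_mul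
          Complex.I)).aestronglyMeasurable
    · exact integrable_const 1
    · intro n
      filter_upwards with x
      rw [mul_comm Complex.I, Complex.norm_exp_ofReal_mul_I]
    · filter_upwards [haesum] with x hx
      exact (hcont1.tendsto _).comp hx.hasSum.tendsto_sum_nat
  have hL2 : Filter.Tendsto
      (fun n => Complex.exp (Complex.I * ((∑ k ∈ Finset.range n, a k * h k : ℝ) : ℂ)) *
          Complex.exp (-(1 / 2 : ℂ) * ((∑ k ∈ Finset.range n, lam k * h k ^ 2 : ℝ) : ℂ)))
      Filter.atTop
      (nhds (Complex.exp (Complex.I * ((∑' k, a k * h k : ℝ) : ℂ)) *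
          Complex.exp (-(1 / 2 : ℂ) * ((∑' k, lam k * h k ^ 2 : ℝ) : ℂ)))) := by
    exact Filter.Tendsto.mul
      ((hcont1.tendsto _).comp hah.hasSum.tendsto_sum_nat)
      ((hcont2.tendsto _).comp hlh.hasSum.tendsto_sum_nat)
  have := tendsto_nhds_unique hL1 (by simpa only [hfin_int] using hL2)
  exact this
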